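/- Let z = r·e^{iπ} with r > 0 and let 0 < b < a ≤ 1, with powers defined via the principal branch. Then 0 ≤ arg((z^a − 1)/(z^b − 1)) ≤ (a − b)·π, where arg((z^a−1)/(z^b−1)) denotes Arg(z^a − 1) − Arg(z^b − 1) with Arg valued in [0, 2π). -/

import Mathlib

/-- The argument function with values in `[0, 2π)`. -/
noncomputable def Arg2 (z : ℂ) : ℝ :=
  if Complex.arg z < 0 then Complex.arg z + 2 * Real.pi else Complex.arg z

open Real

private lemma sin_smul_le' {l s : ℝ} (hl0 : 0 ≤ l) (hl1 : l ≤ 1) (hs0 : 0 ≤ s) (hs : s ≤ π) :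
    l * Real.sin s ≤ Real.sin (l * s) := by
  have h := strictConcaveOn_sin_Icc.concaveOn.2 (Set.mem_Icc.mpr ⟨le_rfl, Real.pi_pos.le⟩)
      (Set.mem_Icc.mpr ⟨hs0, hs⟩) (sub_nonneg.mpr hl1) hl0 (by ring)
  simpa using h

private lemma key5 {r a b : ℝ} (hr : 0 < r) (hb : 0 < b) (hba : b < a) (ha : a ≤ 1) :
    r ^ a * Real.sin (a * π) ≤
      r ^ (a + b) * Real.sin ((a - b) * π) + r ^ b * Real.sin (b * π) := by
  have ha0 : 0 < a := hb.trans hba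
  have hpi := Real.pi_pos
  set l₁ := (a - b) / a with hl₁
  set l₂ := b / a with hl₂
  have hl1sum : l₁ + l₂ = 1 := by rw [hl₁, hl₂]; field_simp; ring
  have hl₁0 : 0 ≤ l₁ := div_nonneg (by linarith) ha0.le
  have hl₂0 : 0 ≤ l₂ := div_nonneg hb.le ha0.le
  have hl₁1 : l₁ ≤ 1 := by rw [hl₁, div_le_one ha0]; linarith
  have hl₂1 : l₂ ≤ 1 := by rw [hl₂, div_le_one ha0]; linarith
  have hs0 : 0 ≤ a * π := by positivity
  have hs1 : a * π ≤ π := by nlinarith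
  have hAM : r ^ a ≤ l₁ * r ^ (a + b) + l₂ * r ^ b := by
    have h := Real.geom_mean_le_arith_mean2_weighted hl₁0 hl₂0
      (Real.rpow_nonneg hr.le (a + b)) (Real.rpow_nonneg hr.le b) hl1sum
    calc r ^ a = (r ^ (a + b)) ^ l₁ * (r ^ b) ^ l₂ := by
          rw [← Real.rpow_mul hr.le, ← Real.rpow_mul hr.le, ← Real.rpow_add hr]
          congr 1
          rw [hl₁, hl₂]
          field_simp
          ring
      _ ≤ _ := h
  have h1 : l₁ * Real.sin (a * π) ≤ Real.sin ((a - b) * π) := by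
    have h := sin_smul_le' hl₁0 hl₁1 hs0 hs1
    rwa [show l₁ * (a * π) = (a - b) * π by rw [hl₁]; field_simp] at h
  have h2 : l₂ * Real.sin (a * π) ≤ Real.sin (b * π) := by
    have h := sin_smul_le' hl₂0 hl₂1 hs0 hs1
    rwa [show l₂ * (a * π) = b * π by rw [hl₂]; field_simp] at h
  have hsin : 0 ≤ Real.sin (a * π) := Real.sin_nonneg_of_nonneg_of_le_pi hs0 hs1
  have hp : (0:ℝ) ≤ r ^ (a + b) := Real.rpow_nonneg hr.le _
  have hq : (0:ℝ) ≤ r ^ b := Real.rpow_nonneg hr.le _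
  calc r ^ a * Real.sin (a * π) ≤ (l₁ * r ^ (a + b) + l₂ * r ^ b) * Real.sin (a * π) :=
        mul_le_mul_of_nonneg_right hAM hsin
    _ = r ^ (a + b) * (l₁ * Real.sin (a * π)) + r ^ b * (l₂ * Real.sin (a * π)) := by ring
    _ ≤ r ^ (a + b) * Real.sin ((a - b) * π) + r ^ b * Real.sin (b * π) := by
        gcongr

private lemma key5' {r a b : ℝ} (hr : 0 < r) (hb : 0 < b) (hba : b < a) (ha : a ≤ 1) :
    r ^ b * Real.sin (a * π) ≤
      Real.sin ((a - b) * π) + r ^ a * Real.sin (b * π) := by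
  have h := key5 (r := r⁻¹) (inv_pos.mpr hr) hb hba ha
  rw [Real.inv_rpow hr.le, Real.inv_rpow hr.le, Real.inv_rpow hr.le,
    Real.rpow_add hr] at h
  have ha' : (0:ℝ) < r ^ a := Real.rpow_pos_of_pos hr a
  have hb' : (0:ℝ) < r ^ b := Real.rpow_pos_of_pos hr b
  have h2 := mul_le_mul_of_nonneg_left h (mul_pos ha' hb').le
  calc r ^ b * Real.sin (a * π)
      = r ^ a * r ^ b * ((r ^ a)⁻¹ * Real.sin (a * π)) := by
        field_simp
    _ ≤ r ^ a * r ^ b * ((r ^ a * r ^ b)⁻¹ * Real.sin ((a - b) * π)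
        + (r ^ b)⁻¹ * Real.sin (b * π)) := h2
    _ = Real.sin ((a - b) * π) + r ^ a * Real.sin (b * π) := by
        field_simp

private lemma cpow_neg_real {r : ℝ} (c : ℝ) (hr : 0 < r) :
    (-(r:ℂ)) ^ (c:ℂ) = ((r ^ c * Real.cos (c * π) : ℝ) : ℂ)
      + ((r ^ c * Real.sin (c * π) : ℝ) : ℂ) * Complex.I := by
  have hne : (-(r:ℂ)) ≠ 0 := by
    simp only [ne_eq, neg_eq_zero, Complex.ofReal_eq_zero]
    exact hr.ne'
  rw [Complex.cpow_def_of_ne_zero hne]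
  have h1 : (-(r:ℂ)) = ((-r : ℝ) : ℂ) := by push_cast; ring
  have hlog : Complex.log (-(r:ℂ)) = ((Real.log r : ℝ) : ℂ) + (π : ℂ) * Complex.I := by
    rw [h1, Complex.log]
    rw [Complex.arg_ofReal_of_neg (by linarith), Complex.norm_real, Real.norm_eq_abs, abs_of_neg (by linarith)]
    push_cast
    ring
  rw [hlog]
  have : (((Real.log r : ℝ) : ℂ) + (π : ℂ) * Complex.I) * (c : ℂ)
      = ((Real.log r * c : ℝ) : ℂ) + ((π * c : ℝ) : ℂ) * Complex.I := by
    push_cast; ring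
  rw [this, Complex.exp_add, ← Complex.ofReal_exp, ← Real.rpow_def_of_pos hr]
  have h2 : Complex.exp (((π * c : ℝ) : ℂ) * Complex.I)
      = ((Real.cos (π * c) : ℝ) : ℂ) + ((Real.sin (π * c) : ℝ) : ℂ) * Complex.I := by
    rw [Complex.exp_mul_I, Complex.ofReal_cos, Complex.ofReal_sin]
  rw [h2, show π * c = c * π from mul_comm π c]
  push_cast
  ring

set_option maxHeartbeats 1000000 in
theorem stmt5 (a b r : ℝ) (hr : 0 < r) (hb : 0 < b) (hba : b < a) (ha : a ≤ 1) :
    0 ≤ Arg2 ((-(r:ℂ)) ^ (a:ℂ) - 1) - Arg2 ((-(r:ℂ)) ^ (b:ℂ) - 1) ∧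
    Arg2 ((-(r:ℂ)) ^ (a:ℂ) - 1) - Arg2 ((-(r:ℂ)) ^ (b:ℂ) - 1) ≤ (a - b) * Real.pi := by
  have hpi := Real.pi_pos
  have ha0 : 0 < a := hb.trans hba
  have hb1 : b < 1 := hba.trans_le ha
  set X : ℂ := (-(r:ℂ)) ^ (a:ℂ) - 1 with hX
  set Y : ℂ := (-(r:ℂ)) ^ (b:ℂ) - 1 with hY
  set pa := r ^ a with hpa
  set pb := r ^ b with hpb
  have hpa0 : 0 < pa := Real.rpow_pos_of_pos hr a
  have hpb0 : 0 < pb := Real.rpow_pos_of_pos hr b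
  have hXre : X.re = pa * Real.cos (a * π) - 1 := by
    rw [hX, cpow_neg_real a hr]
    simp only [Complex.add_re, Complex.sub_re, Complex.mul_re, Complex.I_re, Complex.I_im,
      Complex.ofReal_re, Complex.ofReal_im, Complex.one_re]
    ring
  have hXim : X.im = pa * Real.sin (a * π) := by
    rw [hX, cpow_neg_real a hr]
    simp only [Complex.add_im, Complex.sub_im, Complex.mul_im, Complex.I_re, Complex.I_im,
      Complex.ofReal_re, Complex.ofReal_im, Complex.one_im]
    ring
  have hYre : Y.re = pb * Real.cos (b * π) - 1 := by
    rw [hY, cpow_neg_real b hr]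
    simp only [Complex.add_re, Complex.sub_re, Complex.mul_re, Complex.I_re, Complex.I_im,
      Complex.ofReal_re, Complex.ofReal_im, Complex.one_re]
    ring
  have hYim : Y.im = pb * Real.sin (b * π) := by
    rw [hY, cpow_neg_real b hr]
    simp only [Complex.add_im, Complex.sub_im, Complex.mul_im, Complex.I_re, Complex.I_im,
      Complex.ofReal_re, Complex.ofReal_im, Complex.one_im]
    ring
  have hsinb : 0 < Real.sin (b * π) := by
    apply Real.sin_pos_of_pos_of_lt_pi (by positivity)
    have h := mul_lt_mul_of_pos_right hb1 hpi
    linarith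
  have hsina : 0 ≤ Real.sin (a * π) := by
    apply Real.sin_nonneg_of_nonneg_of_le_pi (by positivity)
    have h := mul_le_mul_of_nonneg_right ha hpi.le
    linarith
  have hYim0 : 0 < Y.im := by rw [hYim]; positivity
  have hXim0 : 0 ≤ X.im := by rw [hXim]; positivity
  have hYne : Y ≠ 0 := by
    intro h0; rw [h0] at hYim0; simp at hYim0
  have hXne : X ≠ 0 := by
    intro h0
    rcases eq_or_lt_of_le ha with h1 | h1
    · have hre : X.re = -r - 1 := by
        rw [hXre, hpa, h1, Real.rpow_one, one_mul, Real.cos_pi]; ring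
      rw [h0] at hre
      simp only [Complex.zero_re] at hre
      linarith
    · have : 0 < X.im := by
        rw [hXim]
        have : 0 < Real.sin (a * π) := by
          apply Real.sin_pos_of_pos_of_lt_pi (by positivity)
          have h := mul_lt_mul_of_pos_right h1 hpi
          linarith
        positivity
      rw [h0] at this; simp at this
  set α := Complex.arg X with hα
  set β := Complex.arg Y with hβ
  have hα0 : 0 ≤ α := Complex.arg_nonneg_iff.mpr hXim0
  have hαπ : α ≤ π := Complex.arg_le_pi X
  have hβ0 : 0 < β := by
    rcases lt_or_eq_of_le (Complex.arg_nonneg_iff.mpr hYim0.le) with h | h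
    · exact h
    · exfalso
      have := (Complex.arg_eq_zero_iff.mp h.symm).2
      rw [this] at hYim0; exact lt_irrefl 0 hYim0
  have hβπ : β < π := Complex.arg_lt_pi_iff.mpr (Or.inr hYim0.ne')
  have hMa : 0 < ‖X‖ := norm_pos_iff.mpr hXne
  have hMb : 0 < ‖Y‖ := norm_pos_iff.mpr hYne
  have hsinα : Real.sin α = X.im / ‖X‖ := Complex.sin_arg X
  have hcosα : Real.cos α = X.re / ‖X‖ := Complex.cos_arg hXne
  have hsinβ : Real.sin β = Y.im / ‖Y‖ := Complex.sin_arg Y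
  have hcosβ : Real.cos β = Y.re / ‖Y‖ := Complex.cos_arg hYne
  set sA := Real.sin (a * π)
  set cA := Real.cos (a * π)
  set sB := Real.sin (b * π)
  set cB := Real.cos (b * π)
  have hsinD : Real.sin ((a - b) * π) = sA * cB - cA * sB := by
    rw [show (a - b) * π = a * π - b * π by ring, Real.sin_sub]
  have hcosD : Real.cos ((a - b) * π) = cA * cB + sA * sB := by
    rw [show (a - b) * π = a * π - b * π by ring, Real.cos_sub]
  -- S := X.im * Y.re - X.re * Y.im ≥ 0
  have hkey := key5 hr hb hba ha
  rw [hsinD, ← hpa, ← hpb, Real.rpow_add hr, ← hpa, ← hpb] at hkey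
  have hS : 0 ≤ X.im * Y.re - X.re * Y.im := by
    rw [hXim, hXre, hYim, hYre]; nlinarith
  have hsinsub : Real.sin (α - β) = (X.im * Y.re - X.re * Y.im)
      / (‖X‖ * ‖Y‖) := by
    rw [Real.sin_sub, hsinα, hcosα, hsinβ, hcosβ]
    field_simp
  have hclaim1 : 0 ≤ α - β := by
    by_contra hlt
    push_neg at hlt
    rw [sub_neg] at hlt
    have h1 : Real.sin (α - β) < 0 := by
      have := Real.sin_pos_of_pos_of_lt_pi (x := β - α) (by linarith) (by linarith)
      rw [show α - β = -(β - α) by ring, Real.sin_neg]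
      linarith
    rw [hsinsub] at h1
    have : 0 ≤ (X.im * Y.re - X.re * Y.im) / (‖X‖ * ‖Y‖) :=
      div_nonneg hS (by positivity)
    linarith
  have hΔπ : (a - b) * π < π := by
    have h := mul_lt_mul_of_pos_right (show a - b < 1 by linarith) hpi
    linarith
  have hΔ0 : 0 < (a - b) * π := by
    have : 0 < a - b := by linarith
    positivity
  have hclaim2 : α - β ≤ (a - b) * π := by
    by_contra hlt
    push_neg at hlt
    have hub : α - β < π := by linarith
    have h1 : 0 < Real.sin (α - β - (a - b) * π) :=
      Real.sin_pos_of_pos_of_lt_pi (by linarith) (by linarith)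
    have h2 : Real.sin (α - β - (a - b) * π)
        = ((X.im * Y.re - X.re * Y.im) * Real.cos ((a - b) * π)
          - (X.re * Y.re + X.im * Y.im) * Real.sin ((a - b) * π))
          / (‖X‖ * ‖Y‖) := by
      rw [Real.sin_sub (α - β), hsinsub, Real.cos_sub, hsinα, hcosα, hsinβ, hcosβ]
      field_simp
      try ring
    have hkey' := key5' hr hb hba ha
    rw [hsinD, ← hpa, ← hpb] at hkey'
    have hid : (X.im * Y.re - X.re * Y.im) * Real.cos ((a - b) * π)
        - (X.re * Y.re + X.im * Y.im) * Real.sin ((a - b) * π)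
        = pb * sA - pa * sB - (sA * cB - cA * sB) := by
      rw [hsinD, hcosD, hXim, hXre, hYim, hYre]
      have hA : sA ^ 2 + cA ^ 2 = 1 := Real.sin_sq_add_cos_sq (a * π)
      have hB : sB ^ 2 + cB ^ 2 = 1 := Real.sin_sq_add_cos_sq (b * π)
      linear_combination (pb * sA) * hB - (pa * sB) * hA
    have hle : Real.sin (α - β - (a - b) * π) ≤ 0 := by
      rw [h2, hid]
      apply div_nonpos_of_nonpos_of_nonneg _ (by positivity)
      linarith
    linarith
  have hArg2X : Arg2 X = α := by
    rw [Arg2, if_neg (not_lt.mpr hα0)]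
  have hArg2Y : Arg2 Y = β := by
    rw [Arg2, if_neg (not_lt.mpr hβ0.le)]
  rw [hArg2X, hArg2Y]
  exact ⟨hclaim1, hclaim2⟩
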